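/- For every n ≥ 1, the sum over all Dyck paths D of semilength n of the product, over all up-steps s of D, of (h(s)+1), equals (2n-1)!!, where h(s) is the y-coordinate of the lower endpoint of step s. -/

import Mathlib

open Finset

/-- A Dyck path of semilength `n`, encoded as `f : Fin (2n) → Bool`
(`true` = up-step `(1,1)`, `false` = down-step `(1,-1)`): exactly `n` up-steps,
and every prefix has at least as many up-steps as down-steps. -/
def IsDyck {n : ℕ} (f : Fin (2 * n) → Bool) : Prop :=
  (univ.filter (fun i => f i = true)).card = n ∧
  ∀ k : Fin (2 * n),
    (univ.filter (fun j => j < k ∧ f j = false)).card ≤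
      (univ.filter (fun j => j < k ∧ f j = true)).card

instance {n : ℕ} : DecidablePred (@IsDyck n) := fun _ => by
  unfold IsDyck; infer_instance

namespace DyckAux

/-- Weighted count of paths of length `m` starting at height `h`, ending at 0,
staying nonnegative, with weight `(height + 1)` on each up-step. -/
def W : ℕ → ℕ → ℕ
  | 0, h => if h = 0 then 1 else 0
  | m+1, h => (h+1) * W m (h+1) + (if h = 0 then 0 else W m (h-1))

/-- Paths from height `h` to height `0` staying nonnegative. -/
def P (m h : ℕ) (f : Fin m → Bool) : Prop :=
  (univ.filter (fun i => f i = false)).card = h + (univ.filter (fun i => f i = true)).card ∧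
  ∀ k : Fin m,
    (univ.filter (fun j => j < k ∧ f j = false)).card ≤
      h + (univ.filter (fun j => j < k ∧ f j = true)).card

instance (m h : ℕ) : DecidablePred (P m h) := fun _ => by unfold P; infer_instance

/-- Weight of a path starting at height `h`. -/
def wt (m h : ℕ) (f : Fin m → Bool) : ℕ :=
  ∏ i ∈ univ.filter (fun i => f i = true),
    (h + (univ.filter (fun j => j < i ∧ f j = true)).card -
      (univ.filter (fun j => j < i ∧ f j = false)).card + 1)

def fcons {m : ℕ} (b : Bool) (g : Fin m → Bool) : Fin (m+1) → Bool := Fin.cons b g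

@[simp] lemma fcons_zero {m : ℕ} (b : Bool) (g : Fin m → Bool) : fcons b g 0 = b := rfl
@[simp] lemma fcons_succ {m : ℕ} (b : Bool) (g : Fin m → Bool) (i : Fin m) :
    fcons b g i.succ = g i := by simp [fcons]

lemma card_lt_succ (m : ℕ) (b : Bool) (g : Fin m → Bool) (c : Bool) (i : Fin m) :
    (univ.filter (fun j : Fin (m+1) => j < i.succ ∧ fcons b g j = c)).card
      = (if b = c then 1 else 0)
        + (univ.filter (fun j : Fin m => j < i ∧ g j = c)).card := by
  rw [Finset.card_filter, Finset.card_filter, Fin.sum_univ_succ]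
  simp [Fin.succ_lt_succ_iff, Fin.succ_pos]

lemma card_lt_zero (m : ℕ) (p : Fin (m+1) → Prop) [DecidablePred p] :
    (univ.filter (fun j : Fin (m+1) => j < 0 ∧ p j)).card = 0 := by
  simp

lemma card_cons (m : ℕ) (b : Bool) (g : Fin m → Bool) (c : Bool) :
    (univ.filter (fun j : Fin (m+1) => fcons b g j = c)).card
      = (if b = c then 1 else 0)
        + (univ.filter (fun j : Fin m => g j = c)).card := by
  rw [Finset.card_filter, Finset.card_filter, Fin.sum_univ_succ]
  simp
  split_ifs <;> simp_all

lemma wt_cons_true (m h : ℕ) (g : Fin m → Bool) :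
    wt (m+1) h (fcons true g) = (h+1) * wt m (h+1) g := by
  unfold wt
  rw [Finset.prod_filter, Fin.prod_univ_succ, Finset.prod_filter]
  simp only [fcons_zero, fcons_succ, card_lt_succ, card_lt_zero, if_pos rfl]
  congr 1
  refine Finset.prod_congr rfl fun i _ => ?_
  by_cases hi : g i = true <;> simp [hi]
  omega

lemma wt_cons_false (m h : ℕ) (g : Fin m → Bool) :
    wt (m+1) (h+1) (fcons false g) = wt m h g := by
  unfold wt
  rw [Finset.prod_filter, Fin.prod_univ_succ, Finset.prod_filter]
  simp only [fcons_zero, fcons_succ, card_lt_succ, card_lt_zero]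
  norm_num
  refine Finset.prod_congr rfl fun i _ => ?_
  by_cases hi : g i = true <;> simp [hi]
  omega

lemma P_cons_true (m h : ℕ) (g : Fin m → Bool) :
    P (m+1) h (fcons true g) ↔ P m (h+1) g := by
  unfold P
  constructor
  · rintro ⟨h1, h2⟩
    simp only [card_cons] at h1
    norm_num at h1
    refine ⟨by omega, fun k => ?_⟩
    have := h2 k.succ
    simp only [card_lt_succ] at this
    norm_num at this
    omega
  · rintro ⟨h1, h2⟩
    constructor
    · simp only [card_cons]; norm_num; omega
    · intro k
      induction k using Fin.cases with
      | zero => simp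
      | succ i =>
        have := h2 i
        simp only [card_lt_succ]
        norm_num
        omega

lemma P_cons_false_succ (m h : ℕ) (g : Fin m → Bool) :
    P (m+1) (h+1) (fcons false g) ↔ P m h g := by
  unfold P
  constructor
  · rintro ⟨h1, h2⟩
    simp only [card_cons] at h1
    norm_num at h1
    refine ⟨by omega, fun k => ?_⟩
    have := h2 k.succ
    simp only [card_lt_succ] at this
    norm_num at this
    omega
  · rintro ⟨h1, h2⟩
    constructor
    · simp only [card_cons]; norm_num; omega
    · intro k
      induction k using Fin.cases with
      | zero => simp
      | succ i =>
        have := h2 i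
        simp only [card_lt_succ]
        norm_num
        omega

lemma P_cons_false_zero (m : ℕ) (g : Fin m → Bool) :
    ¬ P (m+1) 0 (fcons false g) := by
  rintro ⟨h1, h2⟩
  simp only [card_cons] at h1
  norm_num at h1
  have hT : (univ.filter (fun i : Fin m => g i = true)).card ≤ m := by
    simpa using Finset.card_filter_le univ (fun i : Fin m => g i = true)
  have hm : 0 < m := by omega
  have := h2 (Fin.succ ⟨0, hm⟩)
  simp only [card_lt_succ] at this
  have e1 : (univ.filter (fun j : Fin m => j < ⟨0, hm⟩ ∧ g j = false)).card = 0 := by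
    simp [Fin.lt_def]
  have e2 : (univ.filter (fun j : Fin m => j < ⟨0, hm⟩ ∧ g j = true)).card = 0 := by
    simp [Fin.lt_def]
  rw [e1, e2] at this
  norm_num at this

lemma sum_eq_W (m : ℕ) : ∀ h, (∑ f ∈ univ.filter (P m h), wt m h f) = W m h := by
  induction m with
  | zero =>
    intro h
    rw [Finset.sum_filter]
    rw [show (univ : Finset (Fin 0 → Bool)) = {fun i => i.elim0} from
      Finset.eq_singleton_iff_unique_mem.mpr
        ⟨Finset.mem_univ _, fun g _ => funext fun i => i.elim0⟩]
    rw [Finset.sum_singleton]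
    by_cases h0 : h = 0
    · subst h0
      rw [if_pos, show W 0 0 = 1 from rfl]
      · simp [wt]
      · constructor
        · simp
        · intro k; exact k.elim0
    · rw [show W 0 h = 0 from if_neg h0, if_neg]
      rintro ⟨h1, -⟩
      simp at h1
      omega
  | succ m ih =>
    intro h
    rw [Finset.sum_filter,
      ← Equiv.sum_comp (Fin.consEquiv fun _ : Fin (m+1) => Bool)
        (fun f => if P (m+1) h f then wt (m+1) h f else 0),
      Fintype.sum_prod_type, Fintype.sum_bool]
    have hrw : ∀ (b : Bool) (g : Fin m → Bool),
        (Fin.consEquiv fun _ : Fin (m+1) => Bool) (b, g) = fcons b g := fun _ _ => rfl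
    simp only [hrw]
    have hT : (∑ g : Fin m → Bool,
          if P (m+1) h (fcons true g) then wt (m+1) h (fcons true g) else 0)
        = (h+1) * W m (h+1) := by
      rw [← ih (h+1), Finset.sum_filter, Finset.mul_sum]
      refine Finset.sum_congr rfl fun g _ => ?_
      by_cases hg : P m (h+1) g
      · rw [if_pos ((P_cons_true m h g).mpr hg), if_pos hg, wt_cons_true]
      · rw [if_neg (fun c => hg ((P_cons_true m h g).mp c)), if_neg hg, mul_zero]
    have hF : (∑ g : Fin m → Bool,
          if P (m+1) h (fcons false g) then wt (m+1) h (fcons false g) else 0)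
        = if h = 0 then 0 else W m (h-1) := by
      rcases Nat.eq_zero_or_pos h with rfl | h0
      · rw [if_pos rfl]
        refine Finset.sum_eq_zero fun g _ => ?_
        rw [if_neg (P_cons_false_zero m g)]
      · obtain ⟨h', rfl⟩ : ∃ h', h = h' + 1 := ⟨h - 1, by omega⟩
        rw [if_neg (Nat.succ_ne_zero h'), Nat.add_sub_cancel, ← ih h', Finset.sum_filter]
        refine Finset.sum_congr rfl fun g _ => ?_
        by_cases hg : P m h' g
        · rw [if_pos ((P_cons_false_succ m h' g).mpr hg), if_pos hg, wt_cons_false]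
        · rw [if_neg (fun c => hg ((P_cons_false_succ m h' g).mp c)), if_neg hg]
    rw [hT, hF]
    rfl

lemma dfac_step (a : ℕ) (ha : 1 ≤ a) :
    Nat.doubleFactorial a = a * Nat.doubleFactorial (a - 2) := by
  match a, ha with
  | 1, _ => rfl
  | (a+2), _ => simp [Nat.doubleFactorial]

lemma W_even : ∀ m h, (m + h) % 2 = 0 →
    W m h = m.choose h * Nat.doubleFactorial (m - h - 1) := by
  intro m
  induction m with
  | zero =>
    intro h _
    match h with
    | 0 => simp [W]
    | h+1 => simp [W]
  | succ m ih =>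
    intro h hp
    have hW : W (m+1) h = (h+1) * W m (h+1) + (if h = 0 then 0 else W m (h-1)) := rfl
    rcases Nat.eq_zero_or_pos h with rfl | h0
    · have e0 : m + 1 - 0 - 1 = m := by omega
      have e1 : m - (0+1) - 1 = m - 2 := by omega
      rw [hW, ih (0+1) (by omega), e1, e0]
      simp only [Nat.choose_zero_right, Nat.choose_one_right, one_mul, if_pos rfl,
        add_zero, zero_add]
      rw [dfac_step m (by omega)]
      simp
    · obtain ⟨h', rfl⟩ : ∃ h', h = h' + 1 := ⟨h - 1, by omega⟩
      rw [hW, if_neg (Nat.succ_ne_zero h'), Nat.add_sub_cancel,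
        ih (h'+1+1) (by omega), ih h' (by omega)]
      have e4 : m + 1 - (h' + 1) - 1 = m - h' - 1 := by omega
      have e5 : m - (h' + 1 + 1) - 1 = m - h' - 3 := by omega
      rw [e4, e5]
      by_cases hmh : h' + 1 ≤ m
      · have e1 : Nat.doubleFactorial (m - h' - 1)
            = (m - h' - 1) * Nat.doubleFactorial (m - h' - 3) := by
          rw [dfac_step _ (by omega), show m - h' - 1 - 2 = m - h' - 3 by omega]
        have e2 : m.choose (h'+1+1) * (h'+1+1) = m.choose (h'+1) * (m - h' - 1) := by
          have h := Nat.choose_succ_right_eq m (h'+1)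
          have : m - (h'+1) = m - h' - 1 := by omega
          rw [this] at h
          exact h
        have e3 : (m+1).choose (h'+1) = m.choose h' + m.choose (h'+1) :=
          Nat.choose_succ_succ m h'
        rw [e3, e1]
        calc (h'+1+1) * (m.choose (h'+1+1) * Nat.doubleFactorial (m - h' - 3))
              + m.choose h' * ((m - h' - 1) * Nat.doubleFactorial (m - h' - 3))
            = (m.choose (h'+1+1) * (h'+1+1)) * Nat.doubleFactorial (m - h' - 3)
              + m.choose h' * ((m - h' - 1) * Nat.doubleFactorial (m - h' - 3)) := by ring
          _ = (m.choose (h'+1) * (m - h' - 1)) * Nat.doubleFactorial (m - h' - 3)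
              + m.choose h' * ((m - h' - 1) * Nat.doubleFactorial (m - h' - 3)) := by rw [e2]
          _ = (m.choose h' + m.choose (h'+1))
              * ((m - h' - 1) * Nat.doubleFactorial (m - h' - 3)) := by ring
      · rcases Nat.lt_or_ge h' m with hlt | hge
        · omega
        rcases Nat.eq_or_lt_of_le hge with rfl | hgt
        · have hch1 : (m+1).choose (m+1) = 1 := Nat.choose_self _
          have hch2 : m.choose (m+1+1) = 0 := Nat.choose_eq_zero_of_lt (by omega)
          have hch3 : m.choose m = 1 := Nat.choose_self _
          rw [hch1, hch2, hch3]
          have : m - m - 1 = 0 := by omega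
          rw [this]
          simp [Nat.doubleFactorial]
        · have hch1 : (m+1).choose (h'+1) = 0 := Nat.choose_eq_zero_of_lt (by omega)
          have hch2 : m.choose (h'+1+1) = 0 := Nat.choose_eq_zero_of_lt (by omega)
          have hch3 : m.choose h' = 0 := Nat.choose_eq_zero_of_lt (by omega)
          rw [hch1, hch2, hch3]
          ring

end DyckAux

/-- The sum over all Dyck paths of semilength `n ≥ 1` of the product over all
up-steps `s` of `h(s) + 1`, where `h(s)` is the height of the lower endpoint of
`s`, equals the double factorial `(2n-1)!!`. -/
theorem stmt_5 (n : ℕ) (hn : 1 ≤ n) :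
    ∑ f ∈ univ.filter (fun f : Fin (2 * n) → Bool => IsDyck f),
      ∏ i ∈ univ.filter (fun i => f i = true),
        ((univ.filter (fun j => j < i ∧ f j = true)).card -
          (univ.filter (fun j => j < i ∧ f j = false)).card + 1)
      = Nat.doubleFactorial (2 * n - 1) := by
  have hset : (univ.filter (fun f : Fin (2 * n) → Bool => IsDyck f))
      = univ.filter (DyckAux.P (2 * n) 0) := by
    apply Finset.filter_congr
    intro f _
    have key := Finset.card_filter_add_card_filter_not
      (s := (univ : Finset (Fin (2 * n)))) (p := fun i => f i = true)
    simp only [Bool.not_eq_true] at key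
    rw [Finset.card_univ, Fintype.card_fin] at key
    constructor
    · rintro ⟨h1, h2⟩
      exact ⟨by omega, fun k => by simpa using h2 k⟩
    · rintro ⟨h1, h2⟩
      exact ⟨by omega, fun k => by simpa using h2 k⟩
  rw [hset]
  rw [Finset.sum_congr rfl (fun f _ => ?_)]
  · rw [DyckAux.sum_eq_W, DyckAux.W_even _ _ (by omega)]
    simp
  · show _ = DyckAux.wt (2 * n) 0 f
    unfold DyckAux.wt
    refine Finset.prod_congr rfl fun i _ => ?_
    rw [zero_add]
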